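/- Let $G = S_d \ltimes (\mathbb{Z}/2\mathbb{Z})^d$ act on $\mathbb{R}^d$ by permuting coordinates and flipping signs (the hyperoctahedral group, i.e., the group of signed permutation matrices), and let $\mathbf{a}$ be the unit vector in the direction of $(1, 1/\sqrt{2}, \ldots, 1/\sqrt{d})$. Then there is an absolute constant $c > 0$ such that for every $\mathbf{v} \in \mathbb{C}^d$, $\sup_{g \in G} |\langle \mathbf{v}, \rho(g)\mathbf{a} \rangle| \geq c\, |\mathbf{v}| / \sqrt{\log(d+1)}$, where $\rho(g)$ is the signed permutation matrix corresponding to $g$. -/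

import Mathlib

open Finset


lemma sorted_sum_lower {d : ℕ} (w : Fin d → ℝ) (hw : ∀ k, 0 ≤ w k)
    (hanti : Antitone w) :
    Real.sqrt (∑ k, w k ^ 2) ≤ ∑ k : Fin d, w k * (1 / Real.sqrt (k.1 + 1)) := by
  set S := ∑ k : Fin d, w k ^ 2 with hS
  have hS0 : 0 ≤ S := Finset.sum_nonneg fun k _ => sq_nonneg _
  rcases eq_or_lt_of_le hS0 with h0 | hpos
  · rw [← h0, Real.sqrt_zero]
    exact Finset.sum_nonneg fun k _ => mul_nonneg (hw k) (by positivity)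
  have key : ∀ k : Fin d, w k * Real.sqrt (k.1 + 1) ≤ Real.sqrt S := by
    intro k
    have h1 : w k ^ 2 * (k.1 + 1) ≤ S := by
      calc w k ^ 2 * ((k.1 : ℝ) + 1)
          = ∑ _i ∈ Finset.Iic k, w k ^ 2 := by
            rw [Finset.sum_const, Fin.card_Iic, nsmul_eq_mul]; push_cast; ring
        _ ≤ ∑ i ∈ Finset.Iic k, w i ^ 2 := Finset.sum_le_sum fun i hi =>
            pow_le_pow_left₀ (hw k) (hanti (Finset.mem_Iic.mp hi)) 2
        _ ≤ S := Finset.sum_le_sum_of_subset_of_nonneg (Finset.subset_univ _)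
            fun i _ _ => sq_nonneg _
    have h2 := Real.sqrt_le_sqrt h1
    rwa [Real.sqrt_mul (sq_nonneg _), Real.sqrt_sq (hw k)] at h2
  have step : S ≤ Real.sqrt S * ∑ k : Fin d, w k * (1 / Real.sqrt (k.1 + 1)) := by
    rw [Finset.mul_sum, hS]
    refine Finset.sum_le_sum fun k _ => ?_
    have hk : (0:ℝ) < Real.sqrt (k.1 + 1) := Real.sqrt_pos.mpr (by positivity)
    have hrw : w k ^ 2 = (w k * Real.sqrt (k.1+1)) * (w k * (1 / Real.sqrt (k.1+1))) := by
      field_simp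
    rw [hrw]
    exact mul_le_mul_of_nonneg_right (key k) (mul_nonneg (hw k) (by positivity))
  have hsq : Real.sqrt S * Real.sqrt S = S := Real.mul_self_sqrt hS0
  have hs : 0 < Real.sqrt S := Real.sqrt_pos.mpr hpos
  nlinarith [step, hsq]

lemma exists_perm {d : ℕ} (u : Fin d → ℝ) (hu : ∀ j, 0 ≤ u j) :
    ∃ σ : Equiv.Perm (Fin d),
      Real.sqrt (∑ j, u j ^ 2) ≤ ∑ j, u j * (1 / Real.sqrt (((σ.symm j).1 : ℝ) + 1)) := by
  set τ := Tuple.sort (fun i => -u i) with hτ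
  have hmono := Tuple.monotone_sort (fun i => -u i)
  have hanti : Antitone (u ∘ τ) := by
    intro i j hij
    have := hmono hij
    simpa using this
  refine ⟨τ, ?_⟩
  have h1 := sorted_sum_lower (u ∘ τ) (fun k => hu _) hanti
  have e1 : ∑ k : Fin d, (u ∘ τ) k ^ 2 = ∑ j, u j ^ 2 :=
    Equiv.sum_comp τ (fun j => u j ^ 2)
  have e2 : ∑ j, u j * (1 / Real.sqrt (((τ.symm j).1 : ℝ) + 1))
      = ∑ k : Fin d, (u ∘ τ) k * (1 / Real.sqrt ((k.1 : ℝ) + 1)) := by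
    rw [← Equiv.sum_comp τ (fun j => u j * (1 / Real.sqrt (((τ.symm j).1 : ℝ) + 1)))]
    simp
  rw [e2]
  rw [e1] at h1
  exact h1

lemma harmonic_bound (d : ℕ) (hd : 1 ≤ d) :
    (∑ k : Fin d, 1 / ((k.1 : ℝ) + 1)) ≤ 3 * Real.log (d + 1) := by
  have h1 : (∑ k : Fin d, 1 / ((k.1 : ℝ) + 1)) = (harmonic d : ℝ) := by
    rw [Fin.sum_univ_eq_sum_range (fun k => 1 / ((k : ℝ) + 1)) d]
    rw [harmonic]
    push_cast
    simp [one_div]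
  rw [h1]
  have h2 := harmonic_le_one_add_log d
  have hlog2 : (0.6931471803 : ℝ) < Real.log 2 := Real.log_two_gt_d9
  have h3 : Real.log 2 ≤ Real.log (d + 1) := by
    apply Real.log_le_log (by norm_num)
    have : (1:ℝ) ≤ (d:ℝ) := by exact_mod_cast hd
    linarith
  have h4 : Real.log d ≤ Real.log (d + 1) := by
    have hd1 : (1:ℝ) ≤ (d:ℝ) := by exact_mod_cast hd
    apply Real.log_le_log (by linarith)
    linarith
  linarith

lemma final_chain (d : ℕ) (hd : 1 ≤ d) (Sv Su H : ℝ) (hSv : 0 ≤ Sv) (hSu : 0 ≤ Su)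
    (hhalf : Sv ≤ 2 * Su) (hHpos : 0 < H) (hH : H ≤ 3 * Real.log (d + 1)) :
    (1/3) * Real.sqrt Sv / Real.sqrt (Real.log (d + 1)) ≤ Real.sqrt Su / Real.sqrt H := by
  have hd1 : (1:ℝ) ≤ (d:ℝ) := by exact_mod_cast hd
  have hlogpos : 0 < Real.log (d + 1) := Real.log_pos (by linarith)
  have hL : 0 < Real.sqrt (Real.log (d + 1)) := Real.sqrt_pos.mpr hlogpos
  have hh : 0 < Real.sqrt H := Real.sqrt_pos.mpr hHpos
  rw [div_le_div_iff₀ hL hh]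
  have h1 : Real.sqrt Sv ≤ Real.sqrt 2 * Real.sqrt Su := by
    rw [← Real.sqrt_mul (by norm_num)]
    exact Real.sqrt_le_sqrt hhalf
  have h2 : Real.sqrt H ≤ Real.sqrt 3 * Real.sqrt (Real.log (d + 1)) := by
    rw [← Real.sqrt_mul (by norm_num)]
    exact Real.sqrt_le_sqrt hH
  have h6 : Real.sqrt 2 * Real.sqrt 3 ≤ 3 := by
    nlinarith [Real.sq_sqrt (show (0:ℝ) ≤ 2 by norm_num),
      Real.sq_sqrt (show (0:ℝ) ≤ 3 by norm_num), Real.sqrt_nonneg 2, Real.sqrt_nonneg 3]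
  have hSvnn := Real.sqrt_nonneg Sv
  have hSunn := Real.sqrt_nonneg Su
  nlinarith [mul_le_mul h1 h2 hh.le (by positivity : (0:ℝ) ≤ Real.sqrt 2 * Real.sqrt Su),
    Real.sqrt_nonneg 2, Real.sqrt_nonneg 3, mul_nonneg hSunn hL.le]


/-- For the hyperoctahedral group acting on `ℂ^d` by signed permutations and
`a` the unit vector in the direction of `(1, 1/√2, …, 1/√d)`, every `v ∈ ℂ^d` satisfies
`sup_g |⟨v, ρ(g) a⟩| ≥ c |v| / √(log (d+1))`.  A group element is recorded as a pair
`(σ, ε)` of a permutation and a choice of signs, and `ρ(σ,ε) a = (ε j • a (σ⁻¹ j))_j`. -/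
theorem stmt1 :
    ∃ c : ℝ, 0 < c ∧ ∀ (d : ℕ), 1 ≤ d →
      ∀ v : Fin d → ℂ,
        let a : Fin d → ℝ := fun j =>
          (1 / Real.sqrt (j.1 + 1)) / Real.sqrt (∑ k : Fin d, 1 / ((k.1 : ℝ) + 1))
        ∃ (σ : Equiv.Perm (Fin d)) (ε : Fin d → ℝ), (∀ j, ε j = 1 ∨ ε j = -1) ∧
          c * Real.sqrt (∑ j, ‖v j‖ ^ 2) / Real.sqrt (Real.log (d + 1)) ≤
            ‖∑ j, (starRingEnd ℂ) (v j) * ((ε j * a (σ.symm j) : ℝ) : ℂ)‖ := by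
  refine ⟨1/3, by norm_num, ?_⟩
  intro d hd v a
  set H := ∑ k : Fin d, 1 / ((k.1 : ℝ) + 1) with hH
  have hHpos : 0 < H := Finset.sum_pos (fun k _ => by positivity)
    (Finset.univ_nonempty_iff.mpr (Fin.pos_iff_nonempty.mp hd))
  have hhH : 0 < Real.sqrt H := Real.sqrt_pos.mpr hHpos
  have ha : ∀ j : Fin d, a j = (1 / Real.sqrt (j.1 + 1)) / Real.sqrt H := fun j => rfl
  have hanonneg : ∀ j, 0 ≤ a j := fun j => by rw [ha]; positivity
  set Sv := ∑ j, ‖v j‖ ^ 2 with hSv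
  set Re2 := ∑ j, (v j).re ^ 2 with hRe2
  set Im2 := ∑ j, (v j).im ^ 2 with hIm2
  have hsplit : Sv = Re2 + Im2 := by
    rw [hSv, hRe2, hIm2, ← Finset.sum_add_distrib]
    refine Finset.sum_congr rfl fun j _ => ?_
    rw [Complex.sq_norm, Complex.normSq_apply]; ring
  have hRe2nn : 0 ≤ Re2 := Finset.sum_nonneg fun j _ => sq_nonneg _
  have hIm2nn : 0 ≤ Im2 := Finset.sum_nonneg fun j _ => sq_nonneg _
  by_cases hcase : Im2 ≤ Re2
  · -- use real parts
    set u : Fin d → ℝ := fun j => |(v j).re| with hu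
    obtain ⟨σ, hσ⟩ := exists_perm u (fun j => abs_nonneg _)
    set ε : Fin d → ℝ := fun j => if 0 ≤ (v j).re then 1 else -1 with hε
    refine ⟨σ, ε, fun j => by by_cases h : 0 ≤ (v j).re <;> simp [hε, h], ?_⟩
    have hre : (∑ j, (starRingEnd ℂ) (v j) * ((ε j * a (σ.symm j) : ℝ) : ℂ)).re
        = ∑ j, u j * a (σ.symm j) := by
      rw [Complex.re_sum]
      refine Finset.sum_congr rfl fun j _ => ?_
      simp only [Complex.mul_re, Complex.ofReal_re, Complex.ofReal_im,
        RingHomCompTriple.comp_apply, Complex.conj_re, Complex.conj_im]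
      by_cases h : 0 ≤ (v j).re
      · simp [hε, hu, h, abs_of_nonneg h]
        try ring
      · simp [hε, hu, h, abs_of_neg (not_le.mp h)]
        try ring
    have habs : ∑ j, u j * a (σ.symm j)
        ≤ ‖∑ j, (starRingEnd ℂ) (v j) * ((ε j * a (σ.symm j) : ℝ) : ℂ)‖ := by
      rw [← hre]
      exact (le_abs_self _).trans (Complex.abs_re_le_norm _)
    have hlow : Real.sqrt Re2 / Real.sqrt H ≤ ∑ j, u j * a (σ.symm j) := by
      have e : ∑ j, u j * a (σ.symm j)
          = (∑ j, u j * (1 / Real.sqrt (((σ.symm j).1 : ℝ) + 1))) / Real.sqrt H := by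
        rw [Finset.sum_div]
        exact Finset.sum_congr rfl fun j _ => by rw [ha]; ring
      rw [e]
      have hRe : Re2 = ∑ j, u j ^ 2 := Finset.sum_congr rfl fun j _ => (sq_abs _).symm
      rw [hRe]
      gcongr
    have hchain := final_chain d hd Sv Re2 H (by rw [hsplit]; linarith) hRe2nn
      (by linarith) hHpos (harmonic_bound d hd)
    calc 1/3 * Real.sqrt Sv / Real.sqrt (Real.log (d + 1))
        ≤ Real.sqrt Re2 / Real.sqrt H := hchain
      _ ≤ ∑ j, u j * a (σ.symm j) := hlow
      _ ≤ _ := habs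
  · -- use imaginary parts
    set u : Fin d → ℝ := fun j => |(v j).im| with hu
    obtain ⟨σ, hσ⟩ := exists_perm u (fun j => abs_nonneg _)
    set ε : Fin d → ℝ := fun j => if 0 ≤ (v j).im then -1 else 1 with hε
    refine ⟨σ, ε, fun j => by by_cases h : 0 ≤ (v j).im <;> simp [hε, h], ?_⟩
    have him : (∑ j, (starRingEnd ℂ) (v j) * ((ε j * a (σ.symm j) : ℝ) : ℂ)).im
        = ∑ j, u j * a (σ.symm j) := by
      rw [Complex.im_sum]
      refine Finset.sum_congr rfl fun j _ => ?_
      simp only [Complex.mul_im, Complex.ofReal_re, Complex.ofReal_im,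
        RingHomCompTriple.comp_apply, Complex.conj_re, Complex.conj_im]
      by_cases h : 0 ≤ (v j).im
      · simp [hε, hu, h, abs_of_nonneg h]
        try ring
      · simp [hε, hu, h, abs_of_neg (not_le.mp h)]
        try ring
    have habs : ∑ j, u j * a (σ.symm j)
        ≤ ‖∑ j, (starRingEnd ℂ) (v j) * ((ε j * a (σ.symm j) : ℝ) : ℂ)‖ := by
      rw [← him]
      exact (le_abs_self _).trans (Complex.abs_im_le_norm _)
    have hlow : Real.sqrt Im2 / Real.sqrt H ≤ ∑ j, u j * a (σ.symm j) := by
      have e : ∑ j, u j * a (σ.symm j)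
          = (∑ j, u j * (1 / Real.sqrt (((σ.symm j).1 : ℝ) + 1))) / Real.sqrt H := by
        rw [Finset.sum_div]
        exact Finset.sum_congr rfl fun j _ => by rw [ha]; ring
      rw [e]
      have hIm : Im2 = ∑ j, u j ^ 2 := Finset.sum_congr rfl fun j _ => (sq_abs _).symm
      rw [hIm]
      gcongr
    have hchain := final_chain d hd Sv Im2 H (by rw [hsplit]; linarith) hIm2nn
      (by linarith [not_le.mp hcase]) hHpos (harmonic_bound d hd)
    calc 1/3 * Real.sqrt Sv / Real.sqrt (Real.log (d + 1))
        ≤ Real.sqrt Im2 / Real.sqrt H := hchain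
      _ ≤ ∑ j, u j * a (σ.symm j) := hlow
      _ ≤ _ := habs
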